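/- Backward induction existence: every finite extensive game with perfect information in which each player's preference over terminal histories is total and transitive has at least one subgame perfect equilibrium. -/

import Mathlib

open scoped Classical

/-- A finite extensive game with perfect information, with histories encoded
as finite lists of actions and, for each player, a preference relation
(`pref i z z'` meaning `z ≿ᵢ z'`) over histories. -/
structure ExtGameP (A I : Type) where
  H : Finset (List A)
  nil_mem : ([] : List A) ∈ H
  prefix_closed : ∀ h ∈ H, ∀ h' : List A, h' <+: h → h' ∈ H
  P : List A → I
  pref : I → List A → List A → Prop

namespace ExtGameP

variable {A I : Type}

/-- `h` is a terminal history of `G`. -/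
def Terminal (G : ExtGameP A I) (h : List A) : Prop :=
  h ∈ G.H ∧ ∀ a : A, h ++ [a] ∉ G.H

/-- A joint strategy profile is valid if it always picks available actions. -/
def Valid (G : ExtGameP A I) (σ : List A → A) : Prop :=
  ∀ h ∈ G.H, ¬ G.Terminal h → h ++ [σ h] ∈ G.H

/-- Run the game from history `h` following `σ`, with fuel `n`. -/
noncomputable def run (G : ExtGameP A I) (σ : List A → A) : ℕ → List A → List A
  | 0, h => h
  | n + 1, h => if G.Terminal h then h else G.run σ n (h ++ [σ h])

/-- The terminal history reached from `h` by following `σ`. -/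
noncomputable def outcomeFrom (G : ExtGameP A I) (σ : List A → A) (h : List A) :
    List A :=
  G.run σ G.H.card h

/-- Subgame perfect equilibrium: from every history, the outcome of any
unilateral deviation by a player is weakly worse for that player. -/
def IsSPE (G : ExtGameP A I) (σ : List A → A) : Prop :=
  G.Valid σ ∧
    ∀ i : I, ∀ h ∈ G.H, ∀ σ' : List A → A, G.Valid σ' →
      (∀ h' : List A, G.P h' ≠ i → σ' h' = σ h') →
      G.pref i (G.outcomeFrom σ h) (G.outcomeFrom σ' h)

end ExtGameP

section BestOf

variable {α β : Type}

/-- Pick a maximal element (w.r.t. `r` composed with `f`) out of `a :: l`. -/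
noncomputable def bestOf (r : β → β → Prop) (f : α → β) : List α → α → α
  | [], a => a
  | x :: xs, a =>
    let m := bestOf r f xs a
    if r (f x) (f m) then x else m

lemma bestOf_mem (r : β → β → Prop) (f : α → β) (l : List α) (a : α) :
    bestOf r f l a ∈ a :: l := by
  induction l with
  | nil => simp [bestOf]
  | cons x xs ih =>
    simp only [bestOf]
    split_ifs
    · simp
    · rcases List.mem_cons.1 ih with h | h
      · simp [h]
      · simp [h]

lemma bestOf_congr (r : β → β → Prop) (f g : α → β) :
    ∀ (l : List α) (a : α), (∀ x ∈ a :: l, f x = g x) →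
      bestOf r f l a = bestOf r g l a := by
  intro l
  induction l with
  | nil => intro a _; rfl
  | cons x xs ih =>
    intro a hfg
    have hsub : ∀ y ∈ a :: xs, f y = g y := by
      intro y hy
      apply hfg
      rcases List.mem_cons.1 hy with h | h
      · simp [h]
      · simp [h]
    have hm : bestOf r f xs a = bestOf r g xs a := ih a hsub
    simp only [bestOf]
    rw [hm, hfg x (by simp), hsub _ (hm ▸ bestOf_mem r f xs a)]

lemma bestOf_spec (r : β → β → Prop) (f : α → β) (htr : Transitive r) :
    ∀ (l : List α) (a : α),
      (∀ x ∈ a :: l, ∀ y ∈ a :: l, r (f x) (f y) ∨ r (f y) (f x)) →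
      ∀ x ∈ a :: l, r (f (bestOf r f l a)) (f x) := by
  intro l
  induction l with
  | nil =>
    intro a htot x hx
    have h1 : x = a := by simpa using hx
    subst h1
    rcases htot x (by simp) x (by simp) with h | h <;> simpa [bestOf] using h
  | cons x xs ih =>
    intro a htot
    have hsubtot : ∀ u ∈ a :: xs, ∀ v ∈ a :: xs,
        r (f u) (f v) ∨ r (f v) (f u) := by
      intro u hu v hv
      apply htot
      · rcases List.mem_cons.1 hu with h | h
        · simp [h]
        · simp [h]
      · rcases List.mem_cons.1 hv with h | h
        · simp [h]
        · simp [h]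
    have hm := ih a hsubtot
    have hmmem : bestOf r f xs a ∈ a :: x :: xs := by
      rcases List.mem_cons.1 (bestOf_mem r f xs a) with h | h
      · simp [h]
      · simp [h]
    intro y hy
    simp only [bestOf]
    split_ifs with hrx
    · rcases List.mem_cons.1 hy with h | h
      · subst h
        exact htr hrx (hm y (by simp))
      · rcases List.mem_cons.1 h with h' | h'
        · subst h'
          rcases htot y (by simp) y (by simp) with h | h <;> exact h
        · exact htr hrx (hm y (by simp [h']))
    · rcases List.mem_cons.1 hy with h | h
      · exact h ▸ hm a (by simp)
      · rcases List.mem_cons.1 h with h' | h'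
        · subst h'
          rcases htot y (by simp) (bestOf r f xs a) hmmem with h | h
          · exact absurd h hrx
          · exact h
        · exact hm y (by simp [h'])

end BestOf

namespace ExtGameP

variable {A I : Type}

lemma length_lt_card (G : ExtGameP A I) {h : List A} (hh : h ∈ G.H) :
    h.length < G.H.card := by
  have hsub : Finset.image (fun k => h.take k) (Finset.range (h.length + 1)) ⊆ G.H := by
    intro z hz
    simp only [Finset.mem_image, Finset.mem_range] at hz
    obtain ⟨k, _, rfl⟩ := hz
    exact G.prefix_closed h hh _ (List.take_prefix _ _)
  have hinj : Set.InjOn (fun k => h.take k) (Finset.range (h.length + 1)) := by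
    intro x hx y hy hxy
    simp only [Finset.coe_range, Set.mem_Iio, Nat.lt_succ_iff] at hx hy
    have := congrArg List.length hxy
    simpa [List.length_take, Nat.min_eq_left hx, Nat.min_eq_left hy] using this
  calc h.length < h.length + 1 := Nat.lt_succ_self _
    _ = (Finset.range (h.length + 1)).card := (Finset.card_range _).symm
    _ = (Finset.image (fun k => h.take k) (Finset.range (h.length + 1))).card :=
        (Finset.card_image_of_injOn hinj).symm
    _ ≤ G.H.card := Finset.card_le_card hsub

variable [Nonempty A]

/-- The actions available at `h`. -/
noncomputable def childActs (G : ExtGameP A I) (h : List A) : List A :=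
  (G.H.filter fun z => ∃ a : A, z = h ++ [a]).toList.map
    fun z => z.getLastD (Classical.arbitrary A)

lemma mem_childActs (G : ExtGameP A I) {h : List A} {a : A} :
    a ∈ childActs G h ↔ h ++ [a] ∈ G.H := by
  constructor
  · intro ha
    simp only [childActs, List.mem_map, Finset.mem_toList, Finset.mem_filter] at ha
    obtain ⟨z, ⟨hz, b, rfl⟩, hlast⟩ := ha
    have : (h ++ [b]).getLastD (Classical.arbitrary A) = b := by
      simp [List.getLastD_concat]
    rw [this] at hlast
    rwa [hlast] at hz
  · intro ha
    simp only [childActs, List.mem_map, Finset.mem_toList, Finset.mem_filter]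
    exact ⟨h ++ [a], ⟨ha, a, rfl⟩, by simp [List.getLastD_concat]⟩

lemma childActs_ne_nil (G : ExtGameP A I) {h : List A} (hh : h ∈ G.H)
    (hnt : ¬ G.Terminal h) : childActs G h ≠ [] := by
  have : ∃ a : A, h ++ [a] ∈ G.H := by
    by_contra hc
    push_neg at hc
    exact hnt ⟨hh, hc⟩
  obtain ⟨a, ha⟩ := this
  intro hnil
  have := (mem_childActs G).2 ha
  rw [hnil] at this
  exact absurd this List.not_mem_nil

/-- Backward-induction value: the terminal history reached from `h` under the
canonical backward-induction play, computed with fuel `n`. -/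
noncomputable def val (G : ExtGameP A I) : ℕ → List A → List A
  | 0, h => h
  | n + 1, h =>
    if h ∈ G.H ∧ ¬ G.Terminal h then
      match childActs G h with
      | [] => h
      | c :: cs =>
          val G n (h ++ [bestOf (G.pref (G.P h)) (fun a => val G n (h ++ [a])) cs c])
    else h

/-- The backward-induction strategy. -/
noncomputable def sigOf (G : ExtGameP A I) (h : List A) : A :=
  match childActs G h with
  | [] => Classical.arbitrary A
  | c :: cs => bestOf (G.pref (G.P h)) (fun a => val G G.H.card (h ++ [a])) cs c

lemma sig_mem_childActs (G : ExtGameP A I) {h : List A} (hh : h ∈ G.H)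
    (hnt : ¬ G.Terminal h) : sigOf G h ∈ childActs G h := by
  rcases hc : childActs G h with _ | ⟨c, cs⟩
  · exact absurd hc (childActs_ne_nil G hh hnt)
  · have := bestOf_mem (G.pref (G.P h)) (fun a => val G G.H.card (h ++ [a])) cs c
    simp only [sigOf, hc]
    exact hc ▸ this

lemma sig_valid (G : ExtGameP A I) : G.Valid (sigOf G) := by
  intro h hh hnt
  exact (mem_childActs G).1 (sig_mem_childActs G hh hnt)

lemma val_of_terminal (G : ExtGameP A I) {h : List A} (ht : G.Terminal h) :
    ∀ n : ℕ, val G n h = h := by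
  intro n
  cases n with
  | zero => rfl
  | succ n =>
    have hcond : ¬ (h ∈ G.H ∧ ¬ G.Terminal h) := fun ⟨_, ht'⟩ => ht' ht
    simp only [val, if_neg hcond]

lemma val_stable (G : ExtGameP A I) :
    ∀ n : ℕ, ∀ h : List A, h ∈ G.H → G.H.card ≤ n + h.length →
      ∀ m : ℕ, n ≤ m → val G m h = val G n h := by
  intro n
  induction n with
  | zero =>
    intro h hh hdep
    exact absurd (length_lt_card G hh) (by omega)
  | succ n ih =>
    intro h hh hdep m hle
    obtain ⟨m', rfl⟩ : ∃ m', m = m' + 1 := ⟨m - 1, by omega⟩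
    by_cases hnt : G.Terminal h
    · rw [val_of_terminal G hnt, val_of_terminal G hnt]
    · have hcond : h ∈ G.H ∧ ¬ G.Terminal h := ⟨hh, hnt⟩
      rcases hc : childActs G h with _ | ⟨c, cs⟩
      · exact absurd hc (childActs_ne_nil G hh hnt)
      · have key : ∀ x ∈ c :: cs, val G m' (h ++ [x]) = val G n (h ++ [x]) := by
          intro x hx
          have hxH : h ++ [x] ∈ G.H := (mem_childActs G).1 (hc ▸ hx)
          exact ih (h ++ [x]) hxH (by simp; omega) m' (by omega)
        have hcong : bestOf (G.pref (G.P h)) (fun a => val G m' (h ++ [a])) cs c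
            = bestOf (G.pref (G.P h)) (fun a => val G n (h ++ [a])) cs c :=
          bestOf_congr _ _ _ _ _ key
        simp only [val, if_pos hcond, hc, hcong]
        exact key _ (bestOf_mem _ _ cs c)

lemma val_congr (G : ExtGameP A I) {n m : ℕ} {h : List A} (hh : h ∈ G.H)
    (hn : G.H.card ≤ n + h.length) (hm : G.H.card ≤ m + h.length) :
    val G n h = val G m h := by
  rcases le_total n m with hle | hle
  · exact (val_stable G n h hh hn m hle).symm
  · exact val_stable G m h hh hm n hle

lemma val_terminal (G : ExtGameP A I) :
    ∀ n : ℕ, ∀ h : List A, h ∈ G.H → G.H.card ≤ n + h.length →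
      G.Terminal (val G n h) := by
  intro n
  induction n with
  | zero =>
    intro h hh hdep
    exact absurd (length_lt_card G hh) (by omega)
  | succ n ih =>
    intro h hh hdep
    by_cases hnt : G.Terminal h
    · rw [val_of_terminal G hnt]
      exact hnt
    · have hcond : h ∈ G.H ∧ ¬ G.Terminal h := ⟨hh, hnt⟩
      rcases hc : childActs G h with _ | ⟨c, cs⟩
      · exact absurd hc (childActs_ne_nil G hh hnt)
      · simp only [val, if_pos hcond, hc]
        set b := bestOf (G.pref (G.P h)) (fun a => val G n (h ++ [a])) cs c with hb
        have hbmem : b ∈ childActs G h := hc ▸ bestOf_mem _ _ cs c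
        have hbH : h ++ [b] ∈ G.H := (mem_childActs G).1 hbmem
        exact ih (h ++ [b]) hbH (by simp; omega)

lemma val_step (G : ExtGameP A I) {n : ℕ} {h : List A} (hh : h ∈ G.H)
    (hnt : ¬ G.Terminal h) (hdep : G.H.card ≤ n + h.length + 1) :
    val G (n + 1) h = val G n (h ++ [sigOf G h]) := by
  have hcond : h ∈ G.H ∧ ¬ G.Terminal h := ⟨hh, hnt⟩
  rcases hc : childActs G h with _ | ⟨c, cs⟩
  · exact absurd hc (childActs_ne_nil G hh hnt)
  · have key : ∀ x ∈ c :: cs, val G n (h ++ [x]) = val G G.H.card (h ++ [x]) := by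
      intro x hx
      have hxH : h ++ [x] ∈ G.H := (mem_childActs G).1 (hc ▸ hx)
      refine val_congr G hxH (by simp; omega) ?_
      have := length_lt_card G hxH
      omega
    have hcong : bestOf (G.pref (G.P h)) (fun a => val G n (h ++ [a])) cs c
        = bestOf (G.pref (G.P h)) (fun a => val G G.H.card (h ++ [a])) cs c :=
      bestOf_congr _ _ _ _ _ key
    have hsig : sigOf G h
        = bestOf (G.pref (G.P h)) (fun a => val G G.H.card (h ++ [a])) cs c := by
      simp only [sigOf, hc]
    simp only [val, if_pos hcond, hc, hcong, hsig]

lemma val_opt (G : ExtGameP A I)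
    (htotal : ∀ i : I, ∀ z z' : List A, G.Terminal z → G.Terminal z' →
      G.pref i z z' ∨ G.pref i z' z)
    (htrans : ∀ i : I, Transitive (G.pref i))
    {h : List A} (hh : h ∈ G.H) (hnt : ¬ G.Terminal h)
    {b : A} (hb : h ++ [b] ∈ G.H) :
    G.pref (G.P h) (val G G.H.card (h ++ [sigOf G h])) (val G G.H.card (h ++ [b])) := by
  rcases hc : childActs G h with _ | ⟨c, cs⟩
  · exact absurd hc (childActs_ne_nil G hh hnt)
  · have hmemb : b ∈ c :: cs := hc ▸ (mem_childActs G).2 hb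
    have htot' : ∀ x ∈ c :: cs, ∀ y ∈ c :: cs,
        G.pref (G.P h) (val G G.H.card (h ++ [x])) (val G G.H.card (h ++ [y])) ∨
        G.pref (G.P h) (val G G.H.card (h ++ [y])) (val G G.H.card (h ++ [x])) := by
      intro x hx y hy
      have hxH : h ++ [x] ∈ G.H := (mem_childActs G).1 (hc ▸ hx)
      have hyH : h ++ [y] ∈ G.H := (mem_childActs G).1 (hc ▸ hy)
      exact htotal _ _ _
        (val_terminal G _ _ hxH (by omega))
        (val_terminal G _ _ hyH (by omega))
    have hspec := bestOf_spec (G.pref (G.P h)) (fun a => val G G.H.card (h ++ [a]))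
      (htrans _) cs c htot' b hmemb
    have hsig : sigOf G h
        = bestOf (G.pref (G.P h)) (fun a => val G G.H.card (h ++ [a])) cs c := by
      simp only [sigOf, hc]
    rw [hsig]
    exact hspec

lemma run_terminal (G : ExtGameP A I) (σ : List A → A) {h : List A}
    (ht : G.Terminal h) : ∀ n : ℕ, G.run σ n h = h := by
  intro n
  cases n with
  | zero => rfl
  | succ n => simp [run, ht]

lemma run_add (G : ExtGameP A I) (σ : List A → A) :
    ∀ n k : ℕ, ∀ h : List A, G.run σ (n + k) h = G.run σ k (G.run σ n h) := by
  intro n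
  induction n with
  | zero => intro k h; simp [run]
  | succ n ih =>
    intro k h
    by_cases ht : G.Terminal h
    · rw [run_terminal G σ ht, run_terminal G σ ht, run_terminal G σ ht]
    · have h1 : n + 1 + k = (n + k) + 1 := by omega
      rw [h1]
      simp only [run, if_neg ht]
      exact ih k (h ++ [σ h])

lemma run_mem_terminal (G : ExtGameP A I) {σ : List A → A} (hσ : G.Valid σ) :
    ∀ n : ℕ, ∀ h : List A, h ∈ G.H → G.H.card ≤ n + h.length →
      G.Terminal (G.run σ n h) := by
  intro n
  induction n with
  | zero =>
    intro h hh hdep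
    exact absurd (length_lt_card G hh) (by omega)
  | succ n ih =>
    intro h hh hdep
    by_cases ht : G.Terminal h
    · rw [run_terminal G σ ht]
      exact ht
    · simp only [run, if_neg ht]
      exact ih _ (hσ h hh ht) (by simp; omega)

lemma outcome_terminal (G : ExtGameP A I) (σ : List A → A) {h : List A}
    (ht : G.Terminal h) : G.outcomeFrom σ h = h :=
  run_terminal G σ ht G.H.card

lemma outcome_step (G : ExtGameP A I) {σ : List A → A} (hσ : G.Valid σ)
    {h : List A} (hh : h ∈ G.H) (hnt : ¬ G.Terminal h) :
    G.outcomeFrom σ h = G.outcomeFrom σ (h ++ [σ h]) := by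
  obtain ⟨m, hm⟩ : ∃ m, G.H.card = m + 1 :=
    ⟨G.H.card - 1, (Nat.succ_pred_eq_of_pos (Finset.card_pos.2 ⟨[], G.nil_mem⟩)).symm⟩
  have hchild : h ++ [σ h] ∈ G.H := hσ h hh hnt
  have hterm : G.Terminal (G.run σ m (h ++ [σ h])) := by
    apply run_mem_terminal G hσ m _ hchild
    have := length_lt_card G hh
    simp
    omega
  have h1 : G.outcomeFrom σ h = G.run σ m (h ++ [σ h]) := by
    unfold outcomeFrom
    rw [hm]
    simp only [run, if_neg hnt]
  have h2 : G.outcomeFrom σ (h ++ [σ h]) = G.run σ m (h ++ [σ h]) := by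
    unfold outcomeFrom
    rw [hm, run_add G σ m 1, run_terminal G σ hterm]
  rw [h1, h2]

lemma run_eq_val (G : ExtGameP A I) :
    ∀ n : ℕ, ∀ h : List A, h ∈ G.H → G.H.card ≤ n + h.length →
      G.run (sigOf G) n h = val G n h := by
  intro n
  induction n with
  | zero =>
    intro h hh hdep
    exact absurd (length_lt_card G hh) (by omega)
  | succ n ih =>
    intro h hh hdep
    by_cases ht : G.Terminal h
    · rw [run_terminal G _ ht, val_of_terminal G ht]
    · have hchild : h ++ [sigOf G h] ∈ G.H := sig_valid G h hh ht
      have hrec := ih (h ++ [sigOf G h]) hchild (by simp; omega)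
      simp only [run, if_neg ht]
      rw [hrec, ← val_step G hh ht (by omega)]

lemma outcomeFrom_eq_val (G : ExtGameP A I) {h : List A} (hh : h ∈ G.H) :
    G.outcomeFrom (sigOf G) h = val G G.H.card h :=
  run_eq_val G G.H.card h hh (by omega)

end ExtGameP

/-- Backward induction existence: every finite extensive game with perfect
information in which each player's preference over terminal histories is
total and transitive has at least one subgame perfect equilibrium. -/
theorem stmt_18 {A I : Type} [Nonempty A] (G : ExtGameP A I)
    (htotal : ∀ i : I, ∀ z z' : List A, G.Terminal z → G.Terminal z' →
      G.pref i z z' ∨ G.pref i z' z)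
    (htrans : ∀ i : I, Transitive (G.pref i)) :
    ∃ σ : List A → A, G.IsSPE σ := by
  refine ⟨ExtGameP.sigOf G, ExtGameP.sig_valid G, ?_⟩
  intro i h hh σ' hσ' hagree
  have main : ∀ n : ℕ, ∀ h : List A, h ∈ G.H → G.H.card - h.length ≤ n →
      G.pref i (ExtGameP.val G G.H.card h) (G.outcomeFrom σ' h) := by
    intro n
    induction n with
    | zero =>
      intro h hh hd
      exact absurd (ExtGameP.length_lt_card G hh) (by omega)
    | succ n ih =>
      intro h hh hd
      by_cases ht : G.Terminal h
      · rw [ExtGameP.val_of_terminal G ht, ExtGameP.outcome_terminal G σ' ht]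
        rcases htotal i h h ht ht with hp | hp <;> exact hp
      · have hchild' : h ++ [σ' h] ∈ G.H := hσ' h hh ht
        have hstep' : G.outcomeFrom σ' h = G.outcomeFrom σ' (h ++ [σ' h]) :=
          ExtGameP.outcome_step G hσ' hh ht
        have hih := ih (h ++ [σ' h]) hchild' (by simp; omega)
        have hvs : ExtGameP.val G G.H.card h
            = ExtGameP.val G G.H.card (h ++ [ExtGameP.sigOf G h]) := by
          have hchild : h ++ [ExtGameP.sigOf G h] ∈ G.H := ExtGameP.sig_valid G h hh ht
          have e1 : ExtGameP.val G G.H.card h = ExtGameP.val G (G.H.card + 1) h :=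
            ExtGameP.val_congr G hh (by omega) (by omega)
          rw [e1, ExtGameP.val_step G hh ht (by omega)]
        by_cases hpi : G.P h = i
        · have hopt := ExtGameP.val_opt G htotal htrans hh ht hchild'
          rw [hpi] at hopt
          rw [hstep', hvs]
          exact htrans i hopt hih
        · have heq : σ' h = ExtGameP.sigOf G h := hagree h hpi
          rw [heq] at hstep' hih
          rw [hstep', hvs]
          exact hih
  have hmain := main G.H.card h hh (by omega)
  rwa [← ExtGameP.outcomeFrom_eq_val G hh] at hmain
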